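/- Let m be a positive integer, g ∈ {0,1}^m group labels, b a positive integer, ε = 1/b, and let T_1, …, T_m be independent random variables taking values in {0, ε, 2ε, …}. Define the at-risk indicator vector Ȳ(t) ∈ {0,1}^m by Ȳ_j(t) = 1{T_j ≥ t}, the group risk counts Y_g(t) = #{j : g_j = g, T_j ≥ t}, and event counts O_g[t', t] = Y_g(t') − Y_g(t), O[t',t] = O_0[t',t] + O_1[t',t]. Then for every positive integer K, every v, s and every trajectory (ȳ^0, ȳ^ε, …, ȳ^{K−1}) such that the conditioning events have positive probability: P( O_1[K−1,K] = v | O[K−1,K] = s, Ȳ(0) = ȳ^0, Ȳ(ε) = ȳ^ε, …, Ȳ(K−1) = ȳ^{K−1} ) = P( O_1[K−1,K] = v | O[K−1,K] = s, Ȳ(K−1) = ȳ^{K−1} ); i.e., conditionally on the number of events between times K−1 and K, the distribution of the number of treatment-group events depends on the past only through the risk set at time K−1. -/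

import Mathlib

open MeasureTheory ProbabilityTheory

/-- Number of participants in group `grp` still at risk at grid time `k`:
`Y_grp(k) = #{j : g_j = grp, T_j ≥ k}`. -/
def riskCount {Ω : Type*} {m : ℕ} (g : Fin m → Bool) (T : Fin m → Ω → ℕ)
    (grp : Bool) (k : ℕ) (ω : Ω) : ℕ :=
  (Finset.univ.filter fun j => g j = grp ∧ k ≤ T j ω).card

/-- Number of events in group `grp` in the time interval `(k, k']`:
`O_grp[k,k'] = Y_grp(k) − Y_grp(k')`. -/
def eventsBetween {Ω : Type*} {m : ℕ} (g : Fin m → Bool) (T : Fin m → Ω → ℕ)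
    (grp : Bool) (k k' : ℕ) (ω : Ω) : ℕ :=
  riskCount g T grp k ω - riskCount g T grp k' ω

lemma aux_card_subtype {α : Type*} (s : Finset α) (p : α → Prop) [DecidablePred p] :
    (Finset.univ.filter (fun i : {x // x ∈ s} => p ↑i)).card = (s.filter p).card := by
  classical
  apply Finset.card_bij (fun (i : {x // x ∈ s}) _ => (i : α))
  · intro i hi
    simp only [Finset.mem_filter, Finset.mem_univ, true_and] at hi
    exact Finset.mem_filter.mpr ⟨i.2, hi⟩
  · intro i _ j _ h; exact Subtype.ext h
  · intro j hj
    simp only [Finset.mem_filter] at hj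
    exact ⟨⟨j, hj.1⟩, by simp [hj.2], rfl⟩

/-- Conditional independence of the past given the current risk set (first part of
Theorem A.1): for independent event times `T_1, …, T_m` on the ε-grid (`ε = 1/b`, grid
index `k` corresponding to time `k·ε`), conditionally on the number of events `s` between
times `K−1` and `K`, the probability that `v` of them fall in the treatment group is the
same whether one conditions on the whole at-risk trajectory `Ȳ(0), Ȳ(ε), …, Ȳ(K−1)` or
only on the risk set `Ȳ(K−1)` at time `K−1` (provided both conditioning events have
positive probability). -/
theorem conditional_treatment_events_depend_only_on_current_risk_set
    {Ω : Type*} [MeasurableSpace Ω] (μ : Measure Ω) [IsProbabilityMeasure μ]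
    (m b : ℕ) (hb : 0 < b) (g : Fin m → Bool) (T : Fin m → Ω → ℕ)
    (hTmeas : ∀ j, Measurable (T j))
    (hTindep : iIndepFun T μ)
    (K : ℕ) (hK : 1 ≤ K) (v s : ℕ) (ybar : ℕ → Fin m → Bool)
    (hpos1 : 0 < μ ({ω | eventsBetween g T false ((K - 1) * b) (K * b) ω
                        + eventsBetween g T true ((K - 1) * b) (K * b) ω = s}
        ∩ {ω | ∀ k ≤ (K - 1) * b, ∀ j, decide (k ≤ T j ω) = ybar k j}))
    (hpos2 : 0 < μ ({ω | eventsBetween g T false ((K - 1) * b) (K * b) ω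
                        + eventsBetween g T true ((K - 1) * b) (K * b) ω = s}
        ∩ {ω | ∀ j, decide ((K - 1) * b ≤ T j ω) = ybar ((K - 1) * b) j})) :
    ProbabilityTheory.cond μ
        ({ω | eventsBetween g T false ((K - 1) * b) (K * b) ω
              + eventsBetween g T true ((K - 1) * b) (K * b) ω = s}
          ∩ {ω | ∀ k ≤ (K - 1) * b, ∀ j, decide (k ≤ T j ω) = ybar k j})
        {ω | eventsBetween g T true ((K - 1) * b) (K * b) ω = v}
      = ProbabilityTheory.cond μ
        ({ω | eventsBetween g T false ((K - 1) * b) (K * b) ω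
              + eventsBetween g T true ((K - 1) * b) (K * b) ω = s}
          ∩ {ω | ∀ j, decide ((K - 1) * b ≤ T j ω) = ybar ((K - 1) * b) j})
        {ω | eventsBetween g T true ((K - 1) * b) (K * b) ω = v} := by
  classical
  set M := (K - 1) * b with hMdef
  set N := K * b with hNdef
  have hMN : M ≤ N := Nat.mul_le_mul_right b (Nat.sub_le K 1)
  -- basic sets
  set Bs : Set Ω := {ω | eventsBetween g T false M N ω
      + eventsBetween g T true M N ω = s} with hBsdef
  set Bv : Set Ω := {ω | eventsBetween g T true M N ω = v} with hBvdef
  set A : Set Ω := {ω | ∀ k ≤ M, ∀ j, decide (k ≤ T j ω) = ybar k j} with hAdef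
  set A' : Set Ω := {ω | ∀ j, decide (M ≤ T j ω) = ybar M j} with hA'def
  -- a witness point for the full-trajectory event
  obtain ⟨ω0, hω0⟩ : (Bs ∩ A).Nonempty := nonempty_of_measure_ne_zero hpos1.ne'
  have hω0A : ∀ k ≤ M, ∀ j, decide (k ≤ T j ω0) = ybar k j := hω0.2
  -- the trajectory is monotone on at-risk participants
  have hyb : ∀ j, ybar M j = true → ∀ k ≤ M, ybar k j = true := by
    intro j hj k hk
    have hMj : M ≤ T j ω0 := by
      have h := hω0A M le_rfl j
      rw [hj] at h
      exact of_decide_eq_true h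
    have h := hω0A k hk j
    rw [← h]
    exact decide_eq_true (le_trans hk hMj)
  -- structural sets
  set R : Set Ω := {ω | ∀ j, ybar M j = true → M ≤ T j ω} with hRdef
  set PF : Set Ω := {ω | ∀ j, ybar M j = false →
      ∀ k ≤ M, decide (k ≤ T j ω) = ybar k j} with hPFdef
  set PS : Set Ω := {ω | ∀ j, ybar M j = false → T j ω < M} with hPSdef
  have hA_eq : A = R ∩ PF := by
    ext ω
    constructor
    · intro h
      refine ⟨fun j hj => ?_, fun j _ k hk => h k hk j⟩
      have h' := h M le_rfl j
      rw [hj] at h'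
      exact of_decide_eq_true h'
    · rintro ⟨h1, h2⟩ k hk j
      cases hbj : ybar M j with
      | false => exact h2 j hbj k hk
      | true =>
        rw [hyb j hbj k hk]
        exact decide_eq_true (le_trans hk (h1 j hbj))
  have hA'_eq : A' = R ∩ PS := by
    ext ω
    constructor
    · intro h
      refine ⟨fun j hj => ?_, fun j hj => ?_⟩
      · have h' := h j; rw [hj] at h'; exact of_decide_eq_true h'
      · have h' := h j; rw [hj] at h'
        exact Nat.not_le.mp (of_decide_eq_false h')
    · rintro ⟨h1, h2⟩ j
      cases hbj : ybar M j with
      | false => exact decide_eq_false (Nat.not_le.mpr (h2 j hbj))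
      | true => exact decide_eq_true (h1 j hbj)
  have hPFS : PF ⊆ PS := by
    intro ω h j hj
    have h' := h j hj M le_rfl
    rw [hj] at h'
    exact Nat.not_le.mp (of_decide_eq_false h')
  -- counting: on R ∩ PS the event counts are counts over at-risk participants
  set cnt : Bool → Ω → ℕ := fun grp ω =>
    (Finset.univ.filter fun j => ybar M j = true ∧ g j = grp ∧ T j ω < N).card with hcntdef
  have hcnt : ∀ ω, ω ∈ R → ω ∈ PS → ∀ grp,
      eventsBetween g T grp M N ω = cnt grp ω := by
    intro ω h1 h2 grp
    have hiff : ∀ j : Fin m, (M ≤ T j ω) ↔ ybar M j = true := by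
      intro j
      cases hbj : ybar M j with
      | false => exact iff_of_false (Nat.not_le.mpr (h2 j hbj)) (by simp)
      | true => exact iff_of_true (h1 j hbj) rfl
    have e1 : riskCount g T grp M ω
        = (Finset.univ.filter fun j => ybar M j = true ∧ g j = grp).card := by
      unfold riskCount
      congr 1
      apply Finset.filter_congr
      intro j _
      rw [hiff j]; exact and_comm
    have e2 : riskCount g T grp N ω
        = (Finset.univ.filter fun j =>
            (ybar M j = true ∧ g j = grp) ∧ ¬ (T j ω < N)).card := by
      unfold riskCount
      congr 1
      apply Finset.filter_congr
      intro j _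
      constructor
      · rintro ⟨hg, hN⟩
        exact ⟨⟨(hiff j).mp (le_trans hMN hN), hg⟩, Nat.not_lt.mpr hN⟩
      · rintro ⟨⟨_, hg⟩, hN⟩
        exact ⟨hg, Nat.not_lt.mp hN⟩
    have e3 := Finset.card_filter_add_card_filter_not
      (s := (Finset.univ.filter fun j => ybar M j = true ∧ g j = grp))
      (p := fun j => T j ω < N)
    rw [Finset.filter_filter, Finset.filter_filter] at e3
    have e4 : cnt grp ω = (Finset.univ.filter fun j =>
        (ybar M j = true ∧ g j = grp) ∧ T j ω < N).card :=
      congrArg Finset.card (Finset.filter_congr (fun j _ => by tauto))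
    unfold eventsBetween
    omega
  -- index sets
  set S₁ : Finset (Fin m) := Finset.univ.filter (fun j => ybar M j = true) with hS₁def
  set S₂ : Finset (Fin m) := Finset.univ.filter (fun j => ybar M j = false) with hS₂def
  have hdisj : Disjoint S₁ S₂ := by
    rw [Finset.disjoint_left]
    intro j h1 h2
    simp only [hS₁def, hS₂def, Finset.mem_filter, Finset.mem_univ, true_and] at h1 h2
    rw [h1] at h2; exact Bool.noConfusion h2
  set X : Ω → ({x // x ∈ S₁} → ℕ) := fun a (i : S₁) => T i a with hXdef
  set Y : Ω → ({x // x ∈ S₂} → ℕ) := fun a (i : S₂) => T i a with hYdef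
  have hX : Measurable X := measurable_pi_lambda _ (fun i => hTmeas i)
  have hY : Measurable Y := measurable_pi_lambda _ (fun i => hTmeas i)
  have hind : IndepFun X Y μ := hTindep.indepFun_finset S₁ S₂ hdisj hTmeas
  -- counts as functions of X
  set cntF : Bool → ({x // x ∈ S₁} → ℕ) → ℕ := fun grp f =>
    (Finset.univ.filter fun i : {x // x ∈ S₁} => g ↑i = grp ∧ f i < N).card with hcntFdef
  have hmemS₁ : ∀ j : Fin m, j ∈ S₁ ↔ ybar M j = true := by
    intro j; simp [hS₁def]
  have hmemS₂ : ∀ j : Fin m, j ∈ S₂ ↔ ybar M j = false := by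
    intro j; simp [hS₂def]
  have hcntF : ∀ ω grp, cntF grp (X ω) = cnt grp ω := by
    intro ω grp
    rw [hcntFdef, hcntdef]
    simp only
    rw [aux_card_subtype S₁ (fun j => g j = grp ∧ T j ω < N)]
    rw [hS₁def, Finset.filter_filter]
  -- target sets
  set Us : Set ({x // x ∈ S₁} → ℕ) :=
    {f | (cntF false f + cntF true f = s) ∧ ∀ i : {x // x ∈ S₁}, M ≤ f i} with hUsdef
  set Usv : Set ({x // x ∈ S₁} → ℕ) :=
    {f | cntF true f = v ∧ (cntF false f + cntF true f = s) ∧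
      ∀ i : {x // x ∈ S₁}, M ≤ f i} with hUsvdef
  set VF : Set ({x // x ∈ S₂} → ℕ) :=
    {f | ∀ i : {x // x ∈ S₂}, ∀ k ≤ M, decide (k ≤ f i) = ybar k ↑i} with hVFdef
  set VS : Set ({x // x ∈ S₂} → ℕ) :=
    {f | ∀ i : {x // x ∈ S₂}, f i < M} with hVSdef
  -- membership characterizations
  have hR_iff : ∀ ω, ω ∈ R ↔ ∀ i : {x // x ∈ S₁}, M ≤ X ω i := by
    intro ω
    constructor
    · intro h i; exact h i ((hmemS₁ i).mp i.2)
    · intro h j hj; exact h ⟨j, (hmemS₁ j).mpr hj⟩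
  have hPF_iff : ∀ ω, ω ∈ PF ↔ Y ω ∈ VF := by
    intro ω
    constructor
    · intro h i k hk; exact h i ((hmemS₂ i).mp i.2) k hk
    · intro h j hj k hk; exact h ⟨j, (hmemS₂ j).mpr hj⟩ k hk
  have hPS_iff : ∀ ω, ω ∈ PS ↔ Y ω ∈ VS := by
    intro ω
    constructor
    · intro h i; exact h i ((hmemS₂ i).mp i.2)
    · intro h j hj; exact h ⟨j, (hmemS₂ j).mpr hj⟩
  -- set factorizations
  have key : ∀ (P : Set Ω) (V : Set ({x // x ∈ S₂} → ℕ)),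
      (∀ ω, ω ∈ P ↔ Y ω ∈ V) → P ⊆ PS →
      (Bs ∩ (R ∩ P) = X ⁻¹' Us ∩ Y ⁻¹' V ∧
       (Bs ∩ (R ∩ P)) ∩ Bv = X ⁻¹' Usv ∩ Y ⁻¹' V) := by
    intro P V hPV hPPS
    have main : ∀ ω, ω ∈ R → ω ∈ P →
        ((ω ∈ Bs ↔ cntF false (X ω) + cntF true (X ω) = s) ∧
          (ω ∈ Bv ↔ cntF true (X ω) = v)) := by
      intro ω hR hP
      have h1 := hcnt ω hR (hPPS hP)
      constructor
      · rw [hBsdef]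
        simp only [Set.mem_setOf_eq, h1 false, h1 true, hcntF ω false, hcntF ω true]
      · rw [hBvdef]
        simp only [Set.mem_setOf_eq, h1 true, hcntF ω true]
    constructor
    · ext ω
      simp only [Set.mem_inter_iff, Set.mem_preimage, hUsdef, Set.mem_setOf_eq]
      constructor
      · rintro ⟨hbs, hr, hp⟩
        exact ⟨⟨((main ω hr hp).1).mp hbs, (hR_iff ω).mp hr⟩, (hPV ω).mp hp⟩
      · rintro ⟨⟨hc, hri⟩, hv⟩
        have hr : ω ∈ R := (hR_iff ω).mpr hri
        have hp : ω ∈ P := (hPV ω).mpr hv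
        exact ⟨((main ω hr hp).1).mpr hc, hr, hp⟩
    · ext ω
      simp only [Set.mem_inter_iff, Set.mem_preimage, hUsvdef, Set.mem_setOf_eq]
      constructor
      · rintro ⟨⟨hbs, hr, hp⟩, hbv⟩
        exact ⟨⟨((main ω hr hp).2).mp hbv, ((main ω hr hp).1).mp hbs,
          (hR_iff ω).mp hr⟩, (hPV ω).mp hp⟩
      · rintro ⟨⟨hcv, hc, hri⟩, hv⟩
        have hr : ω ∈ R := (hR_iff ω).mpr hri
        have hp : ω ∈ P := (hPV ω).mpr hv
        exact ⟨⟨((main ω hr hp).1).mpr hc, hr, hp⟩, ((main ω hr hp).2).mpr hcv⟩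
  obtain ⟨eq1, eq2⟩ := key PF VF hPF_iff hPFS
  obtain ⟨eq3, eq4⟩ := key PS VS hPS_iff (le_refl PS)
  rw [← hA_eq] at eq1 eq2
  rw [← hA'_eq] at eq3 eq4
  -- measurability
  have hUsM : MeasurableSet Us := (Set.to_countable _).measurableSet
  have hUsvM : MeasurableSet Usv := (Set.to_countable _).measurableSet
  have hVFM : MeasurableSet VF := (Set.to_countable _).measurableSet
  have hVSM : MeasurableSet VS := (Set.to_countable _).measurableSet
  have hmeas1 : MeasurableSet (Bs ∩ A) := eq1 ▸ ((hX hUsM).inter (hY hVFM))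
  have hmeas2 : MeasurableSet (Bs ∩ A') := eq3 ▸ ((hX hUsM).inter (hY hVSM))
  -- product formulas
  have m1 : μ (X ⁻¹' Us ∩ Y ⁻¹' VF) = μ (X ⁻¹' Us) * μ (Y ⁻¹' VF) :=
    hind.measure_inter_preimage_eq_mul _ _ hUsM hVFM
  have m2 : μ (X ⁻¹' Usv ∩ Y ⁻¹' VF) = μ (X ⁻¹' Usv) * μ (Y ⁻¹' VF) :=
    hind.measure_inter_preimage_eq_mul _ _ hUsvM hVFM
  have m3 : μ (X ⁻¹' Us ∩ Y ⁻¹' VS) = μ (X ⁻¹' Us) * μ (Y ⁻¹' VS) :=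
    hind.measure_inter_preimage_eq_mul _ _ hUsM hVSM
  have m4 : μ (X ⁻¹' Usv ∩ Y ⁻¹' VS) = μ (X ⁻¹' Usv) * μ (Y ⁻¹' VS) :=
    hind.measure_inter_preimage_eq_mul _ _ hUsvM hVSM
  have hqF0 : μ (Y ⁻¹' VF) ≠ 0 := by
    intro h
    rw [eq1, m1, h, mul_zero] at hpos1
    exact lt_irrefl 0 hpos1
  have hqS0 : μ (Y ⁻¹' VS) ≠ 0 := by
    intro h
    rw [eq3, m3, h, mul_zero] at hpos2
    exact lt_irrefl 0 hpos2
  have cancel : ∀ q : ENNReal, q ≠ 0 → q ≠ ⊤ →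
      (μ (X ⁻¹' Us) * q)⁻¹ * (μ (X ⁻¹' Usv) * q)
        = (μ (X ⁻¹' Us))⁻¹ * μ (X ⁻¹' Usv) := by
    intro q h0 ht
    rw [ENNReal.mul_inv (Or.inr ht) (Or.inr h0)]
    calc (μ (X ⁻¹' Us))⁻¹ * q⁻¹ * (μ (X ⁻¹' Usv) * q)
        = (μ (X ⁻¹' Us))⁻¹ * μ (X ⁻¹' Usv) * (q⁻¹ * q) := by ring
      _ = (μ (X ⁻¹' Us))⁻¹ * μ (X ⁻¹' Usv) := by
          rw [ENNReal.inv_mul_cancel h0 ht, mul_one]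
  rw [cond_apply hmeas1, cond_apply hmeas2, eq2, eq4, eq1, eq3, m1, m2, m3, m4,
    cancel _ hqF0 (measure_ne_top μ _), cancel _ hqS0 (measure_ne_top μ _)]
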